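/- Translational-invariance rank identity for mode unfoldings: let f : ℤ → ℤ → ℂ, let m₁, n₁, m₂, n₂ ≥ 1, and define M ∈ Matrix (Fin m₁ × Fin m₂ × Fin n₂) (Fin n₁) ℂ by M (i₁,i₂,j₂) j₁ = f ((i₁:ℤ) − (j₁:ℤ)) ((i₂:ℤ) − (j₂:ℤ)), and define N ∈ Matrix (Fin m₁ × Fin (m₂+n₂−1)) (Fin n₁) ℂ by N (i₁,c) j₁ = f ((i₁:ℤ) − (j₁:ℤ)) ((c:ℤ) − (n₂−1)). Then rank M = rank N. -/

import Mathlib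

/-- Translational-invariance rank identity for mode unfoldings: the mode-3
unfolding of a 4-mode tensor whose entries depend only on the index differences
`i₁ - j₁` and `i₂ - j₂` has the same rank as the interaction matrix between an
enlarged target index set of size `m₁ × (m₂ + n₂ - 1)` and the source set. -/
theorem translational_invariance_rank (f : ℤ → ℤ → ℂ) (m₁ n₁ m₂ n₂ : ℕ)
    (hm₁ : 1 ≤ m₁) (hn₁ : 1 ≤ n₁) (hm₂ : 1 ≤ m₂) (hn₂ : 1 ≤ n₂) :
    (Matrix.of fun (p : Fin m₁ × Fin m₂ × Fin n₂) (j₁ : Fin n₁) =>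
        f ((p.1 : ℤ) - (j₁ : ℤ)) ((p.2.1 : ℤ) - (p.2.2 : ℤ))).rank =
    (Matrix.of fun (q : Fin m₁ × Fin (m₂ + n₂ - 1)) (j₁ : Fin n₁) =>
        f ((q.1 : ℤ) - (j₁ : ℤ)) ((q.2 : ℤ) - ((n₂ : ℤ) - 1))).rank := by
  rw [Matrix.rank_eq_finrank_span_row, Matrix.rank_eq_finrank_span_row]
  have hset :
      Set.range (Matrix.of fun (p : Fin m₁ × Fin m₂ × Fin n₂) (j₁ : Fin n₁) =>
        f ((p.1 : ℤ) - (j₁ : ℤ)) ((p.2.1 : ℤ) - (p.2.2 : ℤ))) =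
      Set.range (Matrix.of fun (q : Fin m₁ × Fin (m₂ + n₂ - 1)) (j₁ : Fin n₁) =>
        f ((q.1 : ℤ) - (j₁ : ℤ)) ((q.2 : ℤ) - ((n₂ : ℤ) - 1))) := by
    apply Set.Subset.antisymm
    · rintro _ ⟨⟨i₁, i₂, j₂⟩, rfl⟩
      have h1 := i₂.isLt
      have h2 := j₂.isLt
      refine ⟨(i₁, ⟨i₂ + (n₂ - 1) - j₂, by omega⟩), ?_⟩
      funext j₁
      simp only [Matrix.of_apply]
      congr 1
      push_cast [Fin.val_mk]
      omega
    · rintro _ ⟨⟨i₁, c⟩, rfl⟩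
      have h1 := c.isLt
      refine ⟨(i₁, ⟨c + 1 - n₂, by omega⟩, ⟨n₂ - 1 - c, by omega⟩), ?_⟩
      funext j₁
      simp only [Matrix.of_apply]
      congr 1
      push_cast [Fin.val_mk]
      omega
  exact congrArg (fun s => Module.finrank ℂ (Submodule.span ℂ s)) hset
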